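/- Let J ∈ ℝ^{n×N} with singular values at most σ_max, and suppose the signal x lies in the span of the top p left singular vectors w₁,…,w_p of J, with y = x + z. Running gradient descent on (1/2)‖J c − y‖² with step size η ≤ 1/σ_max² from c₀ = 0 yields, for every iteration τ, ‖x − J c_τ‖ ≤ (1 − η σ_p²)^τ ‖x‖ + sqrt( Σ_{i=1}^n ((1 − η σ_i²)^τ − 1)² ⟨w_i, z⟩² ). -/

import Mathlib

open Matrix Finset

private lemma sqrt_sum_sq_add_le {n : ℕ} (a b : Fin n → ℝ) :
    Real.sqrt (∑ i, (a i + b i) ^ 2) ≤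
      Real.sqrt (∑ i, a i ^ 2) + Real.sqrt (∑ i, b i ^ 2) := by
  have := norm_add_le ((WithLp.equiv 2 (Fin n → ℝ)).symm a) ((WithLp.equiv 2 (Fin n → ℝ)).symm b)
  simpa [EuclideanSpace.norm_eq, sq_abs] using this

private lemma norm_pres {n : ℕ} (U : Matrix (Fin n) (Fin n) ℝ) (hU : Uᵀ * U = 1)
    (v : Fin n → ℝ) : ∑ j, (U.mulVec v j) ^ 2 = ∑ i, v i ^ 2 := by
  have h1 : ∑ j, (U.mulVec v j) ^ 2 = U.mulVec v ⬝ᵥ U.mulVec v := by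
    simp [dotProduct, sq]
  have h2 : U.mulVec v ⬝ᵥ U.mulVec v = v ⬝ᵥ v := by
    rw [Matrix.dotProduct_mulVec, ← Matrix.mulVec_transpose, Matrix.mulVec_mulVec, hU,
      Matrix.one_mulVec]
  rw [h1, h2]
  simp [dotProduct, sq]

theorem stmt_4 {n N : ℕ} (J : Matrix (Fin n) (Fin N) ℝ)
    (W : Matrix (Fin n) (Fin n) ℝ) (V : Matrix (Fin N) (Fin n) ℝ)
    (σ : Fin n → ℝ) (hσpos : ∀ i, 0 ≤ σ i) (hσmono : Antitone σ)
    (σmax : ℝ) (hσmax : ∀ i, σ i ≤ σmax)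
    (hW : Wᵀ * W = 1) (hWW : W * Wᵀ = 1) (hV : Vᵀ * V = 1)
    (hSVD : J = W * Matrix.diagonal σ * Vᵀ)
    (p : ℕ) (hp1 : 1 ≤ p) (hp : p < n)
    (x z y : Fin n → ℝ) (hy : y = x + z)
    (hx : x ∈ Submodule.span ℝ {w : Fin n → ℝ | ∃ i : Fin n, i.val < p ∧ w = fun j => W j i})
    (η : ℝ) (hη : 0 < η) (hηstep : η * σmax ^ 2 ≤ 1)
    (c : ℕ → Fin N → ℝ) (hc0 : c 0 = 0)
    (hstep : ∀ τ : ℕ, c (τ + 1) = c τ - η • (Jᵀ.mulVec (J.mulVec (c τ) - y))) :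
    ∀ τ : ℕ,
      Real.sqrt (∑ j : Fin n, (x j - J.mulVec (c τ) j) ^ 2) ≤
        (1 - η * σ ⟨p - 1, Nat.lt_of_le_of_lt (Nat.pred_le p) hp⟩ ^ 2) ^ τ
          * Real.sqrt (∑ j : Fin n, x j ^ 2) +
        Real.sqrt (∑ i : Fin n,
          ((1 - η * σ i ^ 2) ^ τ - 1) ^ 2 * ((fun j => W j i) ⬝ᵥ z) ^ 2) := by
  set q : Fin n := ⟨p - 1, Nat.lt_of_le_of_lt (Nat.pred_le p) hp⟩ with hqdef
  have hσmax0 : 0 ≤ σmax := le_trans (hσpos ⟨0, by omega⟩) (hσmax _)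
  -- step matrix A
  set A : Matrix (Fin n) (Fin n) ℝ := (1 : Matrix (Fin n) (Fin n) ℝ) - η • (J * Jᵀ) with hAdef
  have hJJ : J * Jᵀ = W * Matrix.diagonal (fun i => σ i ^ 2) * Wᵀ := by
    have hJT : Jᵀ = V * Matrix.diagonal σ * Wᵀ := by
      rw [hSVD]
      simp [Matrix.transpose_mul, Matrix.mul_assoc]
    rw [hJT, hSVD]
    have h1 : W * Matrix.diagonal σ * Vᵀ * (V * Matrix.diagonal σ * Wᵀ)
        = W * (Matrix.diagonal σ * ((Vᵀ * V) * (Matrix.diagonal σ * Wᵀ))) := by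
      simp only [Matrix.mul_assoc]
    rw [h1, hV, Matrix.one_mul]
    have h2 : Matrix.diagonal σ * (Matrix.diagonal σ * Wᵀ)
        = Matrix.diagonal (fun i => σ i ^ 2) * Wᵀ := by
      have hfun : (fun i => σ i * σ i) = fun i => σ i ^ 2 := by
        funext i; ring
      rw [← Matrix.mul_assoc, Matrix.diagonal_mul_diagonal, hfun]
    rw [h2, ← Matrix.mul_assoc]
  have hA : A = W * Matrix.diagonal (fun i => 1 - η * σ i ^ 2) * Wᵀ := by
    rw [hAdef, hJJ]
    have h1 : (Matrix.diagonal (fun i => 1 - η * σ i ^ 2) : Matrix (Fin n) (Fin n) ℝ)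
        = 1 - η • Matrix.diagonal (fun i => σ i ^ 2) := by
      rw [← Matrix.diagonal_one, ← Matrix.diagonal_smul, Matrix.diagonal_sub]
      congr 1
    rw [h1, Matrix.mul_sub, Matrix.sub_mul, Matrix.mul_smul, Matrix.smul_mul,
      Matrix.mul_one, hWW]
  have hpow : ∀ (f : Fin n → ℝ) (τ : ℕ),
      (W * Matrix.diagonal f * Wᵀ) ^ τ = W * Matrix.diagonal (fun i => f i ^ τ) * Wᵀ := by
    intro f τ
    induction τ with
    | zero => simp [hWW]
    | succ t ih =>
      rw [pow_succ, ih]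
      have h1 : W * Matrix.diagonal (fun i => f i ^ t) * Wᵀ * (W * Matrix.diagonal f * Wᵀ)
          = W * (Matrix.diagonal (fun i => f i ^ t) * ((Wᵀ * W) * (Matrix.diagonal f * Wᵀ))) := by
        simp only [Matrix.mul_assoc]
      rw [h1, hW, Matrix.one_mul]
      have h2 : Matrix.diagonal (fun i => f i ^ t) * (Matrix.diagonal f * Wᵀ)
          = Matrix.diagonal (fun i => f i ^ (t + 1)) * Wᵀ := by
        have hfun : (fun i => f i ^ t * f i) = fun i => f i ^ (t + 1) := by
          funext i; rw [← pow_succ]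
        rw [← Matrix.mul_assoc, Matrix.diagonal_mul_diagonal, hfun]
      rw [h2, ← Matrix.mul_assoc]
  -- residual recursion
  have hres : ∀ τ : ℕ, y - J.mulVec (c τ) = (A ^ τ).mulVec y := by
    intro τ
    induction τ with
    | zero => simp [hc0]
    | succ t ih =>
      have hJc : J.mulVec (c (t + 1))
          = J.mulVec (c t) - η • (J * Jᵀ).mulVec (J.mulVec (c t) - y) := by
        rw [hstep t, Matrix.mulVec_sub, Matrix.mulVec_smul, Matrix.mulVec_mulVec]
      have hu : J.mulVec (c t) = y - (A ^ t).mulVec y := by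
        rw [← ih]; abel
      rw [pow_succ', ← Matrix.mulVec_mulVec, hAdef, Matrix.sub_mulVec, Matrix.one_mulVec,
        Matrix.smul_mulVec, hJc, hu]
      have h2 : y - (A ^ t).mulVec y - y = -((A ^ t).mulVec y) := by abel
      rw [h2, Matrix.mulVec_neg, smul_neg]
      abel
  -- projections
  have hgen : ∀ v : Fin n → ℝ,
      v ∈ Submodule.span ℝ {w : Fin n → ℝ | ∃ i : Fin n, i.val < p ∧ w = fun j => W j i} →
      ∀ i : Fin n, p ≤ i.val → Wᵀ.mulVec v i = 0 := by
    intro v hv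
    induction hv using Submodule.span_induction with
    | mem w hw =>
      intro i hi
      obtain ⟨k, hk, rfl⟩ := hw
      have h1 : Wᵀ.mulVec (fun j => W j k) i = (Wᵀ * W) i k := by
        simp [Matrix.mulVec, Matrix.mul_apply, dotProduct, Matrix.transpose_apply]
      rw [h1, hW]
      exact Matrix.one_apply_ne (by intro h; subst h; omega)
    | zero => intro i hi; simp
    | add a b _ _ ha hb => intro i hi; rw [Matrix.mulVec_add]; simp [ha i hi, hb i hi]
    | smul r a _ ha => intro i hi; rw [Matrix.mulVec_smul]; simp [ha i hi]
  set ux : Fin n → ℝ := Wᵀ.mulVec x with huxdef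
  set uz : Fin n → ℝ := Wᵀ.mulVec z with huzdef
  have hzW : z = W.mulVec uz := by
    rw [huzdef, Matrix.mulVec_mulVec, hWW, Matrix.one_mulVec]
  have hux0 : ∀ i : Fin n, p ≤ i.val → ux i = 0 := fun i hi => hgen x hx i hi
  intro τ
  set m : Fin n → ℝ := fun i => (1 - η * σ i ^ 2) ^ τ with hmdef
  -- residual in W coordinates
  have hxres : ∀ j, x j - J.mulVec (c τ) j
      = W.mulVec (fun i => m i * ux i + (m i - 1) * uz i) j := by
    have h1 : x - J.mulVec (c τ) = (y - J.mulVec (c τ)) - z := by rw [hy]; abel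
    have h2 : y - J.mulVec (c τ) = W.mulVec (fun i => m i * (ux i + uz i)) := by
      rw [hres τ, hA, hpow, ← Matrix.mulVec_mulVec, ← Matrix.mulVec_mulVec]
      refine congrArg W.mulVec ?_
      funext i
      rw [Matrix.mulVec_diagonal]
      congr 1
      simp only [hy, Matrix.mulVec_add, Pi.add_apply, huxdef, huzdef]
    have h3 : x - J.mulVec (c τ) = W.mulVec (fun i => m i * ux i + (m i - 1) * uz i) := by
      rw [h1, h2, hzW, ← Matrix.mulVec_sub]
      refine congrArg W.mulVec ?_
      funext i
      show m i * (ux i + uz i) - uz i = m i * ux i + (m i - 1) * uz i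
      ring
    intro j
    calc x j - J.mulVec (c τ) j = (x - J.mulVec (c τ)) j := rfl
      _ = _ := by rw [h3]
  -- bounds on m
  have hm_nonneg : ∀ i, 0 ≤ 1 - η * σ i ^ 2 := by
    intro i
    have h1 : η * σ i ^ 2 ≤ η * σmax ^ 2 :=
      mul_le_mul_of_nonneg_left (pow_le_pow_left₀ (hσpos i) (hσmax i) 2) hη.le
    linarith
  have hmq_nonneg : 0 ≤ m q := pow_nonneg (hm_nonneg q) τ
  have hm_le : ∀ i : Fin n, i.val < p → m i ≤ m q := by
    intro i hi
    have hiq : i ≤ q := by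
      rw [Fin.le_def]
      show i.val ≤ p - 1
      omega
    have h1 : σ q ≤ σ i := hσmono hiq
    have h2 : σ q ^ 2 ≤ σ i ^ 2 := pow_le_pow_left₀ (hσpos q) h1 2
    have h3 : η * σ q ^ 2 ≤ η * σ i ^ 2 := mul_le_mul_of_nonneg_left h2 hη.le
    exact pow_le_pow_left₀ (hm_nonneg i) (by linarith) τ
  -- main estimate
  have hLHS : ∑ j, (x j - J.mulVec (c τ) j) ^ 2
      = ∑ i, (m i * ux i + (m i - 1) * uz i) ^ 2 := by
    rw [Finset.sum_congr rfl fun j _ => by rw [hxres j]]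
    exact norm_pres W hW _
  rw [hLHS]
  calc Real.sqrt (∑ i, (m i * ux i + (m i - 1) * uz i) ^ 2)
      ≤ Real.sqrt (∑ i, (m i * ux i) ^ 2) + Real.sqrt (∑ i, ((m i - 1) * uz i) ^ 2) :=
        sqrt_sum_sq_add_le _ _
    _ ≤ _ := by
        have hA1 : Real.sqrt (∑ i, (m i * ux i) ^ 2)
            ≤ (1 - η * σ q ^ 2) ^ τ * Real.sqrt (∑ j, x j ^ 2) := by
          have hsum : ∑ i, (m i * ux i) ^ 2 ≤ m q ^ 2 * ∑ i, ux i ^ 2 := by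
            rw [Finset.mul_sum]
            apply Finset.sum_le_sum
            intro i _
            rw [mul_pow]
            by_cases hi : i.val < p
            · exact mul_le_mul_of_nonneg_right
                (pow_le_pow_left₀ (pow_nonneg (hm_nonneg i) τ) (hm_le i hi) 2) (sq_nonneg _)
            · rw [hux0 i (by omega)]
              simp
          calc Real.sqrt (∑ i, (m i * ux i) ^ 2)
              ≤ Real.sqrt (m q ^ 2 * ∑ i, ux i ^ 2) := Real.sqrt_le_sqrt hsum
            _ = m q * Real.sqrt (∑ i, ux i ^ 2) := by
                rw [Real.sqrt_mul (sq_nonneg _), Real.sqrt_sq hmq_nonneg]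
            _ = m q * Real.sqrt (∑ j, x j ^ 2) := by
                congr 2
                have := norm_pres Wᵀ (by rw [Matrix.transpose_transpose, hWW]) x
                rw [huxdef, this]
            _ ≤ (1 - η * σ q ^ 2) ^ τ * Real.sqrt (∑ j, x j ^ 2) :=
                le_of_eq (by simp only [hmdef])
        have hA2 : Real.sqrt (∑ i, ((m i - 1) * uz i) ^ 2)
            = Real.sqrt (∑ i : Fin n,
                ((1 - η * σ i ^ 2) ^ τ - 1) ^ 2 * ((fun j => W j i) ⬝ᵥ z) ^ 2) := by
          refine congrArg Real.sqrt ?_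
          apply Finset.sum_congr rfl
          intro i _
          have h1 : uz i = (fun j => W j i) ⬝ᵥ z := by
            rw [huzdef]
            simp [Matrix.mulVec, dotProduct, Matrix.transpose_apply]
          rw [mul_pow, h1]
        exact add_le_add hA1 (le_of_eq hA2)
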